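/- Let g be a symmetric bilinear form on ℝ⁴ of Lorentzian signature (+,−,−,−), with matrix (g_{ab}) and inverse (g^{ab}), and let A be a linear form with g⁻¹(A,A) = Σ g^{ab}A_aA_b > 0. Fix q with −1 < q < 1 and q ≠ 0, and define L(y) = g(y,y)^{1−q}A(y)^{2q} on {y : g(y,y) > 0 and A(y) > 0}, with L-metric g^L_{ab}(y) = (1/2)∂²L/∂y^a∂y^b(y). Then det(g^L(y)) < 0 for every such y. -/

import Mathlib

noncomputable section

/-- The quadratic form `g(y,y) = Σ g_{ab} y^a y^b` of a 4×4 matrix. -/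
def quadForm (g : Matrix (Fin 4) (Fin 4) ℝ) (y : Fin 4 → ℝ) : ℝ :=
  ∑ a, ∑ b, g a b * y a * y b

/-- The linear form `A(y) = Σ A_a y^a`. -/
def linForm (A : Fin 4 → ℝ) (y : Fin 4 → ℝ) : ℝ := ∑ a, A a * y a

/-- `g⁻¹(A,A) = Σ g^{ab} A_a A_b`. -/
def coQuadForm (g : Matrix (Fin 4) (Fin 4) ℝ) (A : Fin 4 → ℝ) : ℝ :=
  ∑ a, ∑ b, g⁻¹ a b * A a * A b

/-- The L-metric: the matrix `g^L_{ab}(y) = (1/2) ∂²L/∂y^a∂y^b (y)`. -/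
def Lmetric (L : (Fin 4 → ℝ) → ℝ) (y : Fin 4 → ℝ) : Matrix (Fin 4) (Fin 4) ℝ :=
  Matrix.of fun a b =>
    (1 / 2) * fderiv ℝ (fun z => fderiv ℝ L z (Pi.single b 1)) y (Pi.single a 1)

/-- A symmetric bilinear form on `ℝ⁴` has Lorentzian signature `(+,−,−,−)` if its
quadratic form is linearly equivalent to `u₀² − u₁² − u₂² − u₃²`. -/
def IsLorentzian (g : Matrix (Fin 4) (Fin 4) ℝ) : Prop :=
  ∃ e : (Fin 4 → ℝ) ≃ₗ[ℝ] (Fin 4 → ℝ), ∀ y : Fin 4 → ℝ,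
    quadForm g y = (e y 0) ^ 2 - (e y 1) ^ 2 - (e y 2) ^ 2 - (e y 3) ^ 2

open ContinuousLinearMap in
lemma linForm_hasFDerivAt (A : Fin 4 → ℝ) (z : Fin 4 → ℝ) :
    HasFDerivAt (linForm A)
      (∑ a, A a • (proj a : (Fin 4 → ℝ) →L[ℝ] ℝ)) z := by
  have : linForm A = fun z : Fin 4 → ℝ => ∑ a, A a * z a := rfl
  rw [this]
  apply HasFDerivAt.fun_sum
  intro a _
  exact ((proj a : (Fin 4 → ℝ) →L[ℝ] ℝ).hasFDerivAt (x := z)).const_mul (A a)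

open ContinuousLinearMap in
lemma quadForm_hasFDerivAt (g : Matrix (Fin 4) (Fin 4) ℝ) (z : Fin 4 → ℝ) :
    HasFDerivAt (quadForm g)
      (∑ a, ∑ b, g a b • (z a • (proj b : (Fin 4 → ℝ) →L[ℝ] ℝ)
        + z b • (proj a : (Fin 4 → ℝ) →L[ℝ] ℝ))) z := by
  have : quadForm g = fun z : Fin 4 → ℝ => ∑ a, ∑ b, g a b * (z a * z b) := by
    funext z; simp [quadForm, mul_assoc]
  rw [this]
  apply HasFDerivAt.fun_sum; intro a _
  apply HasFDerivAt.fun_sum; intro b _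
  exact (((proj a : (Fin 4 → ℝ) →L[ℝ] ℝ).hasFDerivAt (x := z)).mul
    ((proj b : (Fin 4 → ℝ) →L[ℝ] ℝ).hasFDerivAt (x := z))).const_mul (g a b)

def P (g : Matrix (Fin 4) (Fin 4) ℝ) (z : Fin 4 → ℝ) (c : Fin 4) : ℝ := ∑ a, g a c * z a

open ContinuousLinearMap in
lemma linD_apply (A : Fin 4 → ℝ) (c : Fin 4) :
    (∑ a, A a • (proj a : (Fin 4 → ℝ) →L[ℝ] ℝ)) (Pi.single c 1) = A c := by
  simp [Pi.single_apply]

open ContinuousLinearMap in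
lemma quadD_apply (g : Matrix (Fin 4) (Fin 4) ℝ) (hgs : g.IsSymm) (z : Fin 4 → ℝ) (c : Fin 4) :
    (∑ a, ∑ b, g a b • (z a • (proj b : (Fin 4 → ℝ) →L[ℝ] ℝ)
        + z b • (proj a : (Fin 4 → ℝ) →L[ℝ] ℝ))) (Pi.single c 1) = 2 * P g z c := by
  simp only [ContinuousLinearMap.sum_apply, ContinuousLinearMap.smul_apply,
    ContinuousLinearMap.add_apply, proj_apply, Pi.single_apply, smul_eq_mul]
  have hsym : ∀ a b, g a b = g b a := fun a b => (Matrix.IsSymm.apply hgs b a)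
  have expand : ∀ y x : Fin 4, g x y * ((if y = c then z x else 0) + if x = c then z y else 0)
      = (if y = c then g x y * z x else 0) + (if x = c then g x y * z y else 0) := by
    intro y x; by_cases h1 : y = c <;> by_cases h2 : x = c <;> simp [h1, h2] <;> ring
  simp only [mul_ite, mul_one, mul_zero]
  rw [Finset.sum_comm]
  simp only [expand, Finset.sum_add_distrib]
  simp only [Finset.sum_ite_irrel, Finset.sum_const_zero, Finset.sum_ite_eq',
    Finset.mem_univ, if_true]
  rw [← Finset.sum_add_distrib]
  have h2 : ∀ x, g x c * z x + g c x * z x = 2 * (g x c * z x) := by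
    intro x; rw [hsym c x]; ring
  simp only [h2, ← Finset.mul_sum, P]

section Main

variable (g : Matrix (Fin 4) (Fin 4) ℝ) (A : Fin 4 → ℝ) (q : ℝ)

/-- First partial derivative formula. -/
def H1 (b : Fin 4) (z : Fin 4 → ℝ) : ℝ :=
  quadForm g z ^ (1-q) * (2*q * linForm A z ^ (2*q-1) * A b)
    + linForm A z ^ (2*q) * ((1-q) * quadForm g z ^ (1-q-1) * (2 * P g z b))

lemma isOpen_U : IsOpen {z : Fin 4 → ℝ | 0 < quadForm g z ∧ 0 < linForm A z} := by
  have hFc : Continuous (quadForm g) :=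
    continuous_iff_continuousAt.2 fun z => (quadForm_hasFDerivAt g z).differentiableAt.continuousAt
  have hGc : Continuous (linForm A) :=
    continuous_iff_continuousAt.2 fun z => (linForm_hasFDerivAt A z).differentiableAt.continuousAt
  exact (isOpen_lt continuous_const hFc).inter (isOpen_lt continuous_const hGc)

open ContinuousLinearMap in
lemma L_hasFDerivAt (L : (Fin 4 → ℝ) → ℝ)
    (hLdef : ∀ y : Fin 4 → ℝ, 0 < quadForm g y → 0 < linForm A y →
      L y = (quadForm g y) ^ (1 - q) * (linForm A y) ^ (2 * q))
    (z : Fin 4 → ℝ) (hFz : 0 < quadForm g z) (hGz : 0 < linForm A z) :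
    HasFDerivAt L
      ((quadForm g z ^ (1-q)) • ((2*q * linForm A z ^ (2*q-1)) •
          (∑ a, A a • (proj a : (Fin 4 → ℝ) →L[ℝ] ℝ)))
        + (linForm A z ^ (2*q)) • (((1-q) * quadForm g z ^ (1-q-1)) •
          (∑ a, ∑ b, g a b • (z a • (proj b : (Fin 4 → ℝ) →L[ℝ] ℝ)
            + z b • (proj a : (Fin 4 → ℝ) →L[ℝ] ℝ))))) z := by
  have hΦ : HasFDerivAt (fun z => (quadForm g z) ^ (1 - q) * (linForm A z) ^ (2 * q)) _ z :=
    HasFDerivAt.mul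
      ((quadForm_hasFDerivAt g z).rpow_const (Or.inl hFz.ne'))
      ((linForm_hasFDerivAt A z).rpow_const (Or.inl hGz.ne'))
  have hev : L =ᶠ[nhds z] (fun z => (quadForm g z) ^ (1 - q) * (linForm A z) ^ (2 * q)) := by
    filter_upwards [(isOpen_U g A).mem_nhds ⟨hFz, hGz⟩] with w hw
    exact hLdef w hw.1 hw.2
  exact hΦ.congr_of_eventuallyEq hev

lemma fderiv_L_single (L : (Fin 4 → ℝ) → ℝ)
    (hLdef : ∀ y : Fin 4 → ℝ, 0 < quadForm g y → 0 < linForm A y →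
      L y = (quadForm g y) ^ (1 - q) * (linForm A y) ^ (2 * q))
    (hgs : g.IsSymm)
    (z : Fin 4 → ℝ) (hFz : 0 < quadForm g z) (hGz : 0 < linForm A z) (b : Fin 4) :
    fderiv ℝ L z (Pi.single b 1) = H1 g A q b z := by
  rw [(L_hasFDerivAt g A q L hLdef z hFz hGz).fderiv]
  simp only [ContinuousLinearMap.add_apply, ContinuousLinearMap.smul_apply, smul_eq_mul,
    linD_apply, quadD_apply g hgs z b, H1]

end Main

section Main2

variable (g : Matrix (Fin 4) (Fin 4) ℝ) (A : Fin 4 → ℝ) (q : ℝ)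

open ContinuousLinearMap in
lemma Lmetric_entry (hgs : g.IsSymm) (L : (Fin 4 → ℝ) → ℝ)
    (hLdef : ∀ y : Fin 4 → ℝ, 0 < quadForm g y → 0 < linForm A y →
      L y = (quadForm g y) ^ (1 - q) * (linForm A y) ^ (2 * q))
    (y : Fin 4 → ℝ) (hFy : 0 < quadForm g y) (hGy : 0 < linForm A y) (a b : Fin 4) :
    Lmetric L y a b =
      (1-q) * quadForm g y ^ (-q) * linForm A y ^ (2*q) * g a b
      - 2*q*(1-q) * quadForm g y ^ (-q-1) * linForm A y ^ (2*q) * (P g y a * P g y b)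
      + 2*q*(1-q) * quadForm g y ^ (-q) * linForm A y ^ (2*q-1) * (P g y a * A b + A a * P g y b)
      + q*(2*q-1) * quadForm g y ^ (1-q) * linForm A y ^ (2*q-2) * (A a * A b) := by
  have hFne : quadForm g y ≠ 0 := hFy.ne'
  have hGne : linForm A y ≠ 0 := hGy.ne'
  have hP : HasFDerivAt (fun z => P g z b) (∑ c, g c b • (proj c : (Fin 4 → ℝ) →L[ℝ] ℝ)) y :=
    linForm_hasFDerivAt (fun c => g c b) y
  have hF := quadForm_hasFDerivAt g y
  have hG := linForm_hasFDerivAt A y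
  have hH1 : HasFDerivAt (H1 g A q b) _ y :=
    HasFDerivAt.add
      ((hF.rpow_const (Or.inl hFne)).mul
        (((hG.rpow_const (Or.inl hGne)).const_mul (2*q)).mul_const (A b)))
      ((hG.rpow_const (Or.inl hGne)).mul
        (((hF.rpow_const (Or.inl hFne)).const_mul (1-q)).mul (hP.const_mul 2)))
  have hev : (fun z => fderiv ℝ L z (Pi.single b 1)) =ᶠ[nhds y] H1 g A q b := by
    filter_upwards [(isOpen_U g A).mem_nhds ⟨hFy, hGy⟩] with w hw
    exact fderiv_L_single g A q L hLdef hgs w hw.1 hw.2 b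
  show (1/2) * fderiv ℝ (fun z => fderiv ℝ L z (Pi.single b 1)) y (Pi.single a 1) = _
  rw [hev.fderiv_eq, hH1.fderiv]
  simp only [ContinuousLinearMap.add_apply, ContinuousLinearMap.smul_apply, smul_eq_mul,
    linD_apply, quadD_apply g hgs y]
  rw [show (1 - q - 1 : ℝ) = -q by ring, show (2*q - 1 - 1 : ℝ) = 2*q-2 by ring]
  ring

end Main2

/-- Bilinear form of g. -/
def S (g : Matrix (Fin 4) (Fin 4) ℝ) (y w : Fin 4 → ℝ) : ℝ := ∑ a, ∑ b, g a b * y a * w b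

lemma S_symm (g : Matrix (Fin 4) (Fin 4) ℝ) (hgs : g.IsSymm) (y w : Fin 4 → ℝ) :
    S g w y = S g y w := by
  have hsym : ∀ a b, g a b = g b a := fun a b => (Matrix.IsSymm.apply hgs b a)
  unfold S
  rw [Finset.sum_comm]
  refine Finset.sum_congr rfl fun b _ => Finset.sum_congr rfl fun a _ => ?_
  rw [hsym a b]; ring

lemma quadForm_add (g : Matrix (Fin 4) (Fin 4) ℝ) (hgs : g.IsSymm) (y w : Fin 4 → ℝ) :
    quadForm g (y + w) = quadForm g y + quadForm g w + 2 * S g y w := by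
  have h : quadForm g (y + w)
      = quadForm g y + quadForm g w + (S g y w + S g w y) := by
    have step : quadForm g (y + w) = ∑ a, ∑ b,
        (g a b * y a * y b + g a b * w a * w b + (g a b * y a * w b + g a b * w a * y b)) := by
      refine Finset.sum_congr rfl fun a _ => Finset.sum_congr rfl fun b _ => ?_
      simp only [Pi.add_apply]; ring
    rw [step]
    simp only [quadForm, S, Finset.sum_add_distrib]
  rw [h, S_symm g hgs]; ring

lemma S_polar (g : Matrix (Fin 4) (Fin 4) ℝ) (hgs : g.IsSymm)
    (e : (Fin 4 → ℝ) ≃ₗ[ℝ] (Fin 4 → ℝ))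
    (he : ∀ y : Fin 4 → ℝ, quadForm g y
      = (e y 0) ^ 2 - (e y 1) ^ 2 - (e y 2) ^ 2 - (e y 3) ^ 2)
    (y w : Fin 4 → ℝ) :
    S g y w = e y 0 * e w 0 - e y 1 * e w 1 - e y 2 * e w 2 - e y 3 * e w 3 := by
  have h1 := he (y + w)
  have h2 := he y
  have h3 := he w
  rw [quadForm_add g hgs] at h1
  simp only [map_add, Pi.add_apply] at h1
  nlinarith [h1, h2, h3]

lemma S_single (g : Matrix (Fin 4) (Fin 4) ℝ) (a b : Fin 4) :
    S g (Pi.single a 1) (Pi.single b 1) = g a b := by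
  simp [S, Pi.single_apply, Finset.sum_ite_eq', mul_ite, ite_mul]

lemma sum_single_smul (c : Fin 4 → ℝ) :
    (∑ k, c k • (Pi.single k 1 : Fin 4 → ℝ)) = c := by
  funext m
  simp [Pi.single_apply, Finset.sum_ite_eq', mul_ite]

lemma lorentz_matrix (g : Matrix (Fin 4) (Fin 4) ℝ) (hgs : g.IsSymm)
    (hglor : IsLorentzian g) :
    g.det < 0 := by
  obtain ⟨e, he⟩ := hglor
  set E : Matrix (Fin 4) (Fin 4) ℝ := Matrix.of fun i j => e (Pi.single j 1) i with hE
  set E' : Matrix (Fin 4) (Fin 4) ℝ := Matrix.of fun i j => e.symm (Pi.single j 1) i with hE'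
  set η : Matrix (Fin 4) (Fin 4) ℝ := Matrix.diagonal ![1,-1,-1,-1] with hη
  have hEE' : E * E' = 1 := by
    ext i j
    have expand : ∀ z : Fin 4 → ℝ, e z i = ∑ k, z k * E i k := by
      intro z
      conv_lhs => rw [← sum_single_smul z]
      simp [map_sum, map_smul, hE]
    have : (E * E') i j = e (e.symm (Pi.single j 1)) i := by
      rw [expand (e.symm (Pi.single j 1))]
      simp [Matrix.mul_apply, hE', mul_comm]
    rw [this]
    simp [Matrix.one_apply, Pi.single_apply, eq_comm]
  have hdetE : E.det * E'.det = 1 := by rw [← Matrix.det_mul, hEE', Matrix.det_one]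
  have hg : g = E.transpose * η * E := by
    ext a b
    have hpol := S_polar g hgs e he (Pi.single a 1) (Pi.single b 1)
    rw [S_single] at hpol
    rw [hpol]
    simp [Matrix.mul_apply, hη, Matrix.diagonal, Fin.sum_univ_four, hE, Matrix.transpose_apply]
    ring
  have hdetη : η.det = -1 := by
    simp [hη, Matrix.det_diagonal, Fin.prod_univ_four]
  have : g.det = -(E.det)^2 := by
    rw [hg, Matrix.det_mul, Matrix.det_mul, Matrix.det_transpose, hdetη]; ring
  rw [this]
  have hEdet : E.det ≠ 0 := by
    intro h; rw [h, zero_mul] at hdetE; exact zero_ne_one hdetE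
  have h2 : 0 < E.det ^ 2 := by positivity
  linarith

lemma mink_rcs (u0 u1 u2 u3 v0 v1 v2 v3 : ℝ)
    (hu : 0 < u0^2 - u1^2 - u2^2 - u3^2) (hv : 0 < v0^2 - v1^2 - v2^2 - v3^2) :
    (u0^2 - u1^2 - u2^2 - u3^2) * (v0^2 - v1^2 - v2^2 - v3^2)
      ≤ (u0 * v0 - u1 * v1 - u2 * v2 - u3 * v3)^2 := by
  set s := u1*v1 + u2*v2 + u3*v3 with hs
  set Pp := u1^2 + u2^2 + u3^2 with hP
  set Qq := v1^2 + v2^2 + v3^2 with hQ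
  have hsq : s^2 ≤ Pp * Qq := by
    rw [hs, hP, hQ]
    nlinarith [sq_nonneg (u1*v2 - u2*v1), sq_nonneg (u1*v3 - u3*v1), sq_nonneg (u2*v3 - u3*v2)]
  have hPp : 0 ≤ Pp := by positivity
  have hQq : 0 ≤ Qq := by positivity
  have hgoal : (u0^2 - Pp) * (v0^2 - Qq) ≤ (u0*v0 - s)^2 := by
    have hu' : Pp < u0^2 := by rw [hP]; nlinarith
    have hv' : Qq < v0^2 := by rw [hQ]; nlinarith
    rcases eq_or_lt_of_le hQq with hQ0 | hQ0
    · have hs0 : s = 0 := by nlinarith [sq_nonneg s]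
      rw [hs0, ← hQ0]
      nlinarith [sq_nonneg v0]
    · nlinarith [sq_nonneg (Qq*u0 - v0*s), mul_nonneg (sub_nonneg.2 hsq) (le_of_lt (sub_pos.2 hv'))]
  calc (u0^2 - u1^2 - u2^2 - u3^2) * (v0^2 - v1^2 - v2^2 - v3^2)
      = (u0^2 - Pp) * (v0^2 - Qq) := by rw [hP, hQ]; ring
    _ ≤ (u0*v0 - s)^2 := hgoal
    _ = (u0 * v0 - u1 * v1 - u2 * v2 - u3 * v3)^2 := by rw [hs]; ring

lemma rev_cs (g : Matrix (Fin 4) (Fin 4) ℝ) (hgs : g.IsSymm)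
    (e : (Fin 4 → ℝ) ≃ₗ[ℝ] (Fin 4 → ℝ))
    (he : ∀ y : Fin 4 → ℝ, quadForm g y
      = (e y 0) ^ 2 - (e y 1) ^ 2 - (e y 2) ^ 2 - (e y 3) ^ 2)
    (y w : Fin 4 → ℝ) (hy : 0 < quadForm g y) (hw : 0 < quadForm g w) :
    quadForm g y * quadForm g w ≤ (S g y w)^2 := by
  rw [S_polar g hgs e he, he y, he w]
  exact mink_rcs _ _ _ _ _ _ _ _ (by rw [← he y]; exact hy) (by rw [← he w]; exact hw)

section Sums
open Matrix

variable (g : Matrix (Fin 4) (Fin 4) ℝ) (A y : Fin 4 → ℝ)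

lemma sum_p_mul_self : ∑ c, P g y c * y c = quadForm g y := by
  simp only [P, quadForm, Finset.sum_mul]
  exact Finset.sum_comm

lemma sum_A_mul : ∑ c, A c * y c = linForm A y := rfl

lemma sum_p_mul_w (w : Fin 4 → ℝ) (hw : g *ᵥ w = A) :
    ∑ c, P g y c * w c = linForm A y := by
  have : ∀ a, A a = ∑ c, g a c * w c := by
    intro a; rw [← hw]; rfl
  simp only [P, Finset.sum_mul, linForm, this]
  rw [Finset.sum_comm]
  refine Finset.sum_congr rfl fun a _ => Finset.sum_congr rfl fun c _ => ?_
  ring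

lemma sum_A_mul_w : ∑ c, A c * (g⁻¹ *ᵥ A) c = coQuadForm g A := by
  simp only [Matrix.mulVec, dotProduct, coQuadForm, Finset.mul_sum]
  refine Finset.sum_congr rfl fun a _ => Finset.sum_congr rfl fun b _ => ?_
  ring

lemma quadForm_w (w : Fin 4 → ℝ) (hw : g *ᵥ w = A) :
    quadForm g w = ∑ c, A c * w c := by
  have : ∀ a, A a = ∑ c, g a c * w c := by
    intro a; rw [← hw]; rfl
  simp only [quadForm, this, Finset.sum_mul]
  refine Finset.sum_congr rfl fun a _ => Finset.sum_congr rfl fun c _ => ?_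
  ring

lemma ginv_mul_p (hgs : g.IsSymm) (hinv' : g⁻¹ * g = 1) (c : Fin 4) :
    (∑ k, g⁻¹ c k * P g y k) = y c := by
  have hsym : ∀ a b, g a b = g b a := fun a b => (Matrix.IsSymm.apply hgs b a)
  have step : (∑ k, g⁻¹ c k * P g y k) = ∑ a, (g⁻¹ * g) c a * y a := by
    simp only [P, Finset.mul_sum]
    rw [Finset.sum_comm]
    refine Finset.sum_congr rfl fun a _ => ?_
    rw [Matrix.mul_apply, Finset.sum_mul]
    refine Finset.sum_congr rfl fun k _ => ?_
    rw [hsym a k]; ring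
  rw [step, hinv']
  simp [Matrix.one_apply, Finset.sum_ite_eq, ite_mul]

end Sums

open Matrix in
lemma S_mulVec (g : Matrix (Fin 4) (Fin 4) ℝ) (A y w : Fin 4 → ℝ) (hw : g *ᵥ w = A) :
    S g y w = linForm A y := by
  have h : ∀ a, A a = ∑ c, g a c * w c := fun a => by rw [← hw]; rfl
  simp only [S, linForm, h, Finset.sum_mul]
  refine Finset.sum_congr rfl fun a _ => Finset.sum_congr rfl fun c _ => ?_
  ring


set_option maxHeartbeats 1600000 in
open Matrix in
/-- For a Lorentzian metric `g`, a `g`-timelike 1-form `A` (`g⁻¹(A,A) > 0`) and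
`−1 < q < 1`, `q ≠ 0`, the L-metric of `L = g(y,y)^{1−q} A(y)^{2q}` has negative
determinant whenever `g(y,y) > 0` and `A(y) > 0`. -/
theorem bogoslovsky_q_between_det_neg (g : Matrix (Fin 4) (Fin 4) ℝ) (hgs : g.IsSymm)
    (hglor : IsLorentzian g) (A : Fin 4 → ℝ) (hA : 0 < coQuadForm g A)
    (q : ℝ) (hq₁ : -1 < q) (hq₂ : q < 1) (hq₀ : q ≠ 0) (L : (Fin 4 → ℝ) → ℝ)
    (hLdef : ∀ y : Fin 4 → ℝ, 0 < quadForm g y → 0 < linForm A y →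
      L y = (quadForm g y) ^ (1 - q) * (linForm A y) ^ (2 * q)) :
    ∀ y : Fin 4 → ℝ, 0 < quadForm g y → 0 < linForm A y →
      (Lmetric L y).det < 0 := by
  obtain ⟨e, he⟩ := hglor
  intro y hFy hGy
  have hdetg : g.det < 0 := lorentz_matrix g hgs ⟨e, he⟩
  have hdu : IsUnit g.det := isUnit_iff_ne_zero.2 (ne_of_lt hdetg)
  have hinv : g * g⁻¹ = 1 := Matrix.mul_nonsing_inv g hdu
  have hinv' : g⁻¹ * g = 1 := Matrix.nonsing_inv_mul g hdu
  set F := quadForm g y with hF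
  set G := linForm A y with hG
  set bb := coQuadForm g A with hbb
  set w : Fin 4 → ℝ := g⁻¹ *ᵥ A with hwdef
  have hw : g *ᵥ w = A := by
    rw [hwdef, Matrix.mulVec_mulVec, hinv, Matrix.one_mulVec]
  have hFne : F ≠ 0 := ne_of_gt hFy
  have hGne : G ≠ 0 := ne_of_gt hGy
  have h1q : (0:ℝ) < 1 - q := by linarith
  have h1qne : (1:ℝ) - q ≠ 0 := ne_of_gt h1q
  -- coefficients
  set β : ℝ := -2*q/F with hβ
  set γ : ℝ := 2*q/G with hγ
  set δ : ℝ := q*(2*q-1)*F/((1-q)*G^2) with hδ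
  set α : ℝ := (1-q) * F ^ (-q) * G ^ (2*q) with hα
  have hαpos : 0 < α := by
    have := Real.rpow_pos_of_pos hFy (-q)
    have := Real.rpow_pos_of_pos hGy (2*q)
    rw [hα]; positivity
  -- the rank-two correction
  set X : Matrix (Fin 4) (Fin 2) ℝ := Matrix.of fun a => ![P g y a, A a] with hX
  set Y : Matrix (Fin 2) (Fin 4) ℝ :=
    Matrix.of ![fun c => β * P g y c + γ * A c, fun c => γ * P g y c + δ * A c] with hY
  -- rpow exponent rewrites
  have e1 : F ^ (-q-1) = F ^ (-q) / F := by rw [Real.rpow_sub hFy, Real.rpow_one]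
  have e2 : G ^ (2*q-1) = G ^ (2*q) / G := by rw [Real.rpow_sub hGy, Real.rpow_one]
  have e3 : F ^ (1-q) = F * F ^ (-q) := by
    rw [show (1-q:ℝ) = 1 + -q by ring, Real.rpow_add hFy, Real.rpow_one]
  have e4 : G ^ (2*q-2) = G ^ (2*q) / G^2 := by
    rw [show (2*q-2:ℝ) = 2*q - ((2:ℕ):ℝ) by norm_num, Real.rpow_sub hGy, Real.rpow_natCast]
  have hMat : Lmetric L y = α • (g + X * Y) := by
    ext a b
    rw [show (α • (g + X * Y)) a b = α * ((g + X * Y) a b) from rfl]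
    rw [Lmetric_entry g A q hgs L hLdef y hFy hGy a b]
    rw [Matrix.add_apply, Matrix.mul_apply, Fin.sum_univ_two]
    rw [show X a 0 = P g y a from rfl, show X a 1 = A a from rfl,
      show Y 0 b = β * P g y b + γ * A b from rfl,
      show Y 1 b = γ * P g y b + δ * A b from rfl]
    rw [← hF, ← hG, e1, e2, e3, e4, hα, hβ, hγ, hδ]
    field_simp
    ring
  -- the 2×2 determinant
  have hgX0 : ∀ c, (g⁻¹ * X) c 0 = y c := by
    intro c
    rw [Matrix.mul_apply]
    simpa [hX] using ginv_mul_p g y hgs hinv' c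
  have hgX1 : ∀ c, (g⁻¹ * X) c 1 = w c := by
    intro c
    rw [Matrix.mul_apply, hwdef]
    simp [Matrix.mulVec, dotProduct, hX]
  have hN00 : (Y * (g⁻¹ * X)) 0 0 = β * F + γ * G := by
    rw [Matrix.mul_apply]
    simp only [hgX0]
    simp only [hY, Matrix.of_apply, Matrix.cons_val_zero]
    simp only [add_mul, Finset.sum_add_distrib, mul_assoc, ← Finset.mul_sum]
    rw [sum_p_mul_self g y, sum_A_mul A y, ← hF, ← hG]
  have hN01 : (Y * (g⁻¹ * X)) 0 1 = β * G + γ * bb := by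
    rw [Matrix.mul_apply]
    simp only [hgX1]
    simp only [hY, Matrix.of_apply, Matrix.cons_val_zero]
    simp only [add_mul, Finset.sum_add_distrib, mul_assoc, ← Finset.mul_sum]
    rw [sum_p_mul_w g A y w hw, hwdef, sum_A_mul_w g A, ← hG, ← hbb]
  have hN10 : (Y * (g⁻¹ * X)) 1 0 = γ * F + δ * G := by
    rw [Matrix.mul_apply]
    simp only [hgX0]
    simp only [hY, Matrix.of_apply, Matrix.cons_val_one, Matrix.head_cons, Matrix.cons_val_zero]
    simp only [add_mul, Finset.sum_add_distrib, mul_assoc, ← Finset.mul_sum]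
    rw [sum_p_mul_self g y, sum_A_mul A y, ← hF, ← hG]
  have hN11 : (Y * (g⁻¹ * X)) 1 1 = γ * G + δ * bb := by
    rw [Matrix.mul_apply]
    simp only [hgX1]
    simp only [hY, Matrix.of_apply, Matrix.cons_val_one, Matrix.head_cons, Matrix.cons_val_zero]
    simp only [add_mul, Finset.sum_add_distrib, mul_assoc, ← Finset.mul_sum]
    rw [sum_p_mul_w g A y w hw, hwdef, sum_A_mul_w g A, ← hG, ← hbb]
  have hdet2 : (g + X * Y).det = g.det * (1 + Y * (g⁻¹ * X)).det := by
    have hgXY : g + X * Y = g * (1 + g⁻¹ * (X * Y)) := by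
      rw [Matrix.mul_add, Matrix.mul_one, ← Matrix.mul_assoc, hinv, Matrix.one_mul]
    rw [hgXY, Matrix.det_mul]
    congr 1
    rw [show g⁻¹ * (X * Y) = (g⁻¹ * X) * Y from (Matrix.mul_assoc _ _ _).symm]
    exact Matrix.det_one_add_mul_comm _ _
  have hdet3 : (1 + Y * (g⁻¹ * X)).det
      = (1 + (β * F + γ * G)) * (1 + (γ * G + δ * bb))
        - (β * G + γ * bb) * (γ * F + δ * G) := by
    rw [Matrix.det_fin_two]
    simp [Matrix.add_apply, Matrix.one_apply, hN00, hN01, hN10, hN11]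
  -- positivity of the 2×2 determinant
  have hFb : q > 0 → F * bb ≤ G^2 := by
    intro hqpos
    have hqw : quadForm g w = bb := by
      rw [quadForm_w g A w hw, hwdef, sum_A_mul_w g A]
    have hbpos : 0 < quadForm g w := by rw [hqw]; exact hA
    have := rev_cs g hgs e he y w hFy hbpos
    rw [S_mulVec g A y w hw, hqw, ← hF, ← hG] at this
    nlinarith [this]
  have hDpos : 0 < (1 + (β * F + γ * G)) * (1 + (γ * G + δ * bb))
        - (β * G + γ * bb) * (γ * F + δ * G) := by
    have hexp : (1 + (β * F + γ * G)) * (1 + (γ * G + δ * bb))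
        - (β * G + γ * bb) * (γ * F + δ * G)
        = ((1+q) * G^2 - q * F * bb) / ((1-q) * G^2) := by
      rw [hβ, hγ, hδ]
      field_simp
      ring
    rw [hexp]
    apply div_pos
    · rcases lt_or_gt_of_ne hq₀ with hq | hq
      · nlinarith [sq_nonneg G, mul_pos hFy hA]
      · have := hFb hq
        nlinarith [sq_nonneg G]
    · positivity
  -- final assembly
  rw [hMat, Matrix.det_smul]
  rw [hdet2, hdet3]
  simp only [Fintype.card_fin]
  have hα4 : 0 < α ^ 4 := by positivity
  nlinarith [mul_pos hα4 (mul_pos (neg_pos.2 hdetg) hDpos)]
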